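/- Let (X,Σ,m) be a finite measure space, V a real vector space, and ℰ : V×V → ℝ a symmetric bilinear map with ℰ(f,f) ≥ 0 for all f ∈ V. Suppose Γ assigns to each f ∈ V an m-integrable function Γ(f) : X → [0,∞) such that ∫_X Γ(f) dm ≤ 2ℰ(f,f) for every f ∈ V, and such that for all f, g ∈ V one has |Γ(f)(x)^{1/2} − Γ(g)(x)^{1/2}| ≤ Γ(f−g)(x)^{1/2} for m-almost every x ∈ X. Then for every ℰ-Cauchy sequence (f_n) ⊂ V (i.e. ℰ(f_n−f_m, f_n−f_m) → 0 as n,m → ∞), the sequence (Γ(f_n))_n converges in L¹(X,m); in particular it is uniformly m-integrable: for every ε > 0 there exists δ > 0 such that for every A ∈ Σ with m(A) < δ one has sup_n ∫_A Γ(f_n) dm ≤ ε. -/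

import Mathlib

open Filter Topology MeasureTheory

lemma aux_abscont {X : Type*} [MeasurableSpace X] {m : Measure X} {u : X → ℝ}
    (hu : Integrable u m) {ε : ℝ} (hε : 0 < ε) :
    ∃ δ : ℝ, 0 < δ ∧ ∀ A : Set X, MeasurableSet A → m A < ENNReal.ofReal δ →
      ∫ x in A, |u x| ∂m ≤ ε := by
  obtain ⟨δ, hδ0, hδ⟩ := (memLp_one_iff_integrable.2 hu).eLpNorm_indicator_le le_rfl
    ENNReal.one_ne_top hε
  refine ⟨δ, hδ0, fun A hA hAδ => ?_⟩
  have h1 := hδ A hA hAδ.le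
  have h2 : ∫ x in A, |u x| ∂m = (eLpNorm (A.indicator u) 1 m).toReal := by
    rw [eLpNorm_indicator_eq_eLpNorm_restrict hA, eLpNorm_one_eq_lintegral_enorm]
    simp_rw [← Real.norm_eq_abs]
    exact integral_norm_eq_lintegral_enorm hu.restrict.aestronglyMeasurable
  rw [h2]
  calc (eLpNorm (A.indicator u) 1 m).toReal ≤ (ENNReal.ofReal ε).toReal :=
        ENNReal.toReal_mono ENNReal.ofReal_ne_top h1
    _ = ε := ENNReal.toReal_ofReal hε.le

lemma aux_fin {X : Type*} [MeasurableSpace X] {m : Measure X} (u : ℕ → X → ℝ)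
    (hu : ∀ n, Integrable (u n) m) {ε : ℝ} (hε : 0 < ε) (N : ℕ) :
    ∃ δ : ℝ, 0 < δ ∧ ∀ i < N, ∀ A : Set X, MeasurableSet A → m A < ENNReal.ofReal δ →
      ∫ x in A, |u i x| ∂m ≤ ε := by
  induction N with
  | zero => exact ⟨1, one_pos, fun i hi => absurd hi (Nat.not_lt_zero i)⟩
  | succ n ih =>
    obtain ⟨δ1, hδ1, h1⟩ := ih
    obtain ⟨δ2, hδ2, h2⟩ := aux_abscont (hu n) hε
    refine ⟨min δ1 δ2, lt_min hδ1 hδ2, fun i hi A hA hm => ?_⟩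
    rcases Nat.lt_succ_iff_lt_or_eq.1 hi with h | h
    · exact h1 i h A hA (hm.trans_le (ENNReal.ofReal_le_ofReal (min_le_left _ _)))
    · subst h; exact h2 A hA (hm.trans_le (ENNReal.ofReal_le_ofReal (min_le_right _ _)))

lemma aux_normsq {X : Type*} [MeasurableSpace X] {m : Measure X} (U : Lp ℝ 2 m) :
    ‖U‖ ^ 2 = ∫ x, (U x) ^ 2 ∂m := by
  rw [← real_inner_self_eq_norm_sq, L2.inner_def]
  refine integral_congr_ae (Eventually.of_forall fun x => ?_)
  simp [RCLike.inner_apply, sq]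


/-- Theorem (uniform integrability of energy densities): if `ℰ` is a nonnegative
definite symmetric bilinear form on a real vector space `V`, `m` a finite measure, and
`Γ` assigns to each `f ∈ V` an integrable nonnegative density with
`∫ Γ(f) dm ≤ 2ℰ(f,f)` and the a.e. triangle inequality
`|√Γ(f) − √Γ(g)| ≤ √Γ(f−g)`, then for every `ℰ`-Cauchy sequence `(f_n)` the densities
`Γ(f_n)` converge in `L¹(X,m)` and are uniformly `m`-integrable. -/
theorem statement_16 {X : Type*} [MeasurableSpace X] (m : Measure X)
    [IsFiniteMeasure m]
    {V : Type*} [AddCommGroup V] [Module ℝ V]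
    (ℰ : V → V → ℝ)
    (hsym : ∀ f g : V, ℰ f g = ℰ g f)
    (hlin_add : ∀ f g h : V, ℰ (f + g) h = ℰ f h + ℰ g h)
    (hlin_smul : ∀ (c : ℝ) (f g : V), ℰ (c • f) g = c * ℰ f g)
    (hnonneg : ∀ f : V, 0 ≤ ℰ f f)
    (Γ : V → X → ℝ)
    (hΓnonneg : ∀ (f : V) (x : X), 0 ≤ Γ f x)
    (hΓint : ∀ f : V, Integrable (Γ f) m)
    (hΓbound : ∀ f : V, ∫ x, Γ f x ∂m ≤ 2 * ℰ f f)
    (hΓtri : ∀ f g : V, ∀ᵐ x ∂m,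
      |Real.sqrt (Γ f x) - Real.sqrt (Γ g x)| ≤ Real.sqrt (Γ (f - g) x)) :
    ∀ f : ℕ → V,
      (∀ ε : ℝ, 0 < ε → ∃ N, ∀ n ≥ N, ∀ k ≥ N, ℰ (f n - f k) (f n - f k) < ε) →
      (∃ g : X → ℝ, Integrable g m ∧
        Tendsto (fun n => ∫ x, |Γ (f n) x - g x| ∂m) atTop (𝓝 0)) ∧
      (∀ ε : ℝ, 0 < ε → ∃ δ : ℝ, 0 < δ ∧ ∀ A : Set X, MeasurableSet A →
        m A < ENNReal.ofReal δ → ∀ n, ∫ x in A, Γ (f n) x ∂m ≤ ε) := by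
  intro f hc
  have part1 : ∃ g : X → ℝ, Integrable g m ∧
      Tendsto (fun n => ∫ x, |Γ (f n) x - g x| ∂m) atTop (𝓝 0) := by
    set h : V → X → ℝ := fun v x => Real.sqrt (Γ v x) with hh
    have hmem : ∀ v, MemLp (h v) 2 m := by
      intro v
      have hmeas : AEStronglyMeasurable (h v) m :=
        Real.continuous_sqrt.comp_aestronglyMeasurable (hΓint v).aestronglyMeasurable
      refine (memLp_two_iff_integrable_sq hmeas).2 ?_
      refine (hΓint v).congr (Eventually.of_forall fun x => ?_)
      simp [hh, Real.sq_sqrt (hΓnonneg v x)]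
    set H : V → Lp ℝ 2 m := fun v => (hmem v).toLp (h v) with hH
    have hnormsq : ∀ v, ‖H v‖ ^ 2 = ∫ x, Γ v x ∂m := by
      intro v
      rw [aux_normsq]
      refine integral_congr_ae ?_
      filter_upwards [(hmem v).coeFn_toLp] with x hx
      rw [hH]; simp only [hx]
      exact Real.sq_sqrt (hΓnonneg v x)
    have hHb : ∀ v, ‖H v‖ ≤ Real.sqrt (2 * ℰ v v) := by
      intro v
      have h1 : ‖H v‖ ^ 2 ≤ 2 * ℰ v v := (hnormsq v).le.trans (hΓbound v)
      calc ‖H v‖ = Real.sqrt (‖H v‖ ^ 2) := (Real.sqrt_sq (norm_nonneg _)).symm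
        _ ≤ _ := Real.sqrt_le_sqrt h1
    have htri : ∀ u v : V, ‖H u - H v‖ ≤ ‖H (u - v)‖ := by
      intro u v
      rw [Lp.norm_def, Lp.norm_def]
      refine ENNReal.toReal_mono (Lp.eLpNorm_ne_top _) ?_
      refine eLpNorm_congr_ae (Lp.coeFn_sub (H u) (H v)) ▸ eLpNorm_mono_ae ?_
      filter_upwards [Lp.coeFn_sub (H u) (H v), (hmem u).coeFn_toLp, (hmem v).coeFn_toLp,
        (hmem (u - v)).coeFn_toLp, hΓtri u v] with x h1 h2 h3 h4 h5
      simp only [Pi.sub_apply, hH, h2, h3, h4, Real.norm_eq_abs]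
      rw [abs_of_nonneg (Real.sqrt_nonneg _)]
      exact h5
    have hcs : CauchySeq (fun n => H (f n)) := by
      rw [Metric.cauchySeq_iff]
      intro ε hε
      obtain ⟨N, hN⟩ := hc (ε ^ 2 / 2) (by positivity)
      refine ⟨N, fun n hn k hk => ?_⟩
      rw [dist_eq_norm]
      have h2 : 2 * ℰ (f n - f k) (f n - f k) < ε ^ 2 := by
        have := hN n hn k hk; linarith
      calc ‖H (f n) - H (f k)‖ ≤ ‖H (f n - f k)‖ := htri _ _
        _ ≤ Real.sqrt (2 * ℰ (f n - f k) (f n - f k)) := hHb _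
        _ < Real.sqrt (ε ^ 2) := Real.sqrt_lt_sqrt (by linarith [hnonneg (f n - f k)]) h2
        _ = ε := Real.sqrt_sq hε.le
    obtain ⟨G, hG⟩ := cauchySeq_tendsto_of_complete hcs
    refine ⟨fun x => (G : X → ℝ) x ^ 2, (Lp.memLp G).integrable_sq, ?_⟩
    have hGnorm : Tendsto (fun n => ‖H (f n) - G‖) atTop (𝓝 0) :=
      tendsto_iff_norm_sub_tendsto_zero.1 hG
    have key : ∀ n, ∫ x, |Γ (f n) x - (G : X → ℝ) x ^ 2| ∂m ≤
        ‖H (f n) - G‖ ^ 2 + 2 * (‖H (f n) - G‖ * ‖G‖) := by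
      intro n
      set D : Lp ℝ 2 m := H (f n) - G with hD
      have hDsq : Integrable (fun x => (D : X → ℝ) x ^ 2) m := (Lp.memLp D).integrable_sq
      have hGsq : Integrable (fun x => (G : X → ℝ) x ^ 2) m := (Lp.memLp G).integrable_sq
      have hmul : Integrable (fun x => |(D : X → ℝ) x| * |(G : X → ℝ) x|) m := by
        have := (L2.integrable_inner (𝕜 := ℝ) D G).abs
        refine this.congr (Eventually.of_forall fun x => ?_)
        simp [RCLike.inner_apply, abs_mul, mul_comm]
      have step1 : ∫ x, |Γ (f n) x - (G : X → ℝ) x ^ 2| ∂m ≤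
          ∫ x, ((D : X → ℝ) x ^ 2 + 2 * (|(D : X → ℝ) x| * |(G : X → ℝ) x|)) ∂m := by
        refine integral_mono_ae (((hΓint (f n)).sub hGsq).abs) (hDsq.add (hmul.const_mul 2)) ?_
        filter_upwards [Lp.coeFn_sub (H (f n)) G, (hmem (f n)).coeFn_toLp] with x h1 h2
        have hDx : (D : X → ℝ) x = h (f n) x - (G : X → ℝ) x := by
          rw [hD, h1]; simp [hH, h2]
        have hΓx : Γ (f n) x = h (f n) x ^ 2 := (Real.sq_sqrt (hΓnonneg (f n) x)).symm
        set a := h (f n) x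
        set b := (G : X → ℝ) x
        rw [hΓx, hDx]
        have : a ^ 2 - b ^ 2 = (a - b) * (a - b) + 2 * ((a - b) * b) := by ring
        rw [this]
        calc |(a - b) * (a - b) + 2 * ((a - b) * b)| ≤
            |(a - b) * (a - b)| + |2 * ((a - b) * b)| := abs_add_le _ _
          _ ≤ (a - b) ^ 2 + 2 * (|a - b| * |b|) := by
            rw [abs_mul, abs_mul, abs_mul, ← sq_abs]
            simp [abs_of_nonneg, sq]
      have step2 : ∫ x, ((D : X → ℝ) x ^ 2 + 2 * (|(D : X → ℝ) x| * |(G : X → ℝ) x|)) ∂m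
          = ∫ x, (D : X → ℝ) x ^ 2 ∂m + 2 * ∫ x, |(D : X → ℝ) x| * |(G : X → ℝ) x| ∂m := by
        rw [integral_add hDsq (hmul.const_mul 2), integral_const_mul]
      have step3 : ∫ x, |(D : X → ℝ) x| * |(G : X → ℝ) x| ∂m ≤ ‖D‖ * ‖G‖ := by
        have hconj : (2 : ℝ).HolderConjugate 2 := (Real.holderConjugate_iff_eq_conjExponent one_lt_two).2 (by norm_num)
        have hmD : MemLp (fun x => |(D : X → ℝ) x|) (ENNReal.ofReal (2:ℝ)) m := by
          rw [show (ENNReal.ofReal (2:ℝ)) = 2 by norm_num]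
          exact (Lp.memLp D).abs
        have hmG : MemLp (fun x => |(G : X → ℝ) x|) (ENNReal.ofReal (2:ℝ)) m := by
          rw [show (ENNReal.ofReal (2:ℝ)) = 2 by norm_num]
          exact (Lp.memLp G).abs
        have hhold := integral_mul_le_Lp_mul_Lq_of_nonneg hconj
          (Eventually.of_forall fun x => abs_nonneg ((D : X → ℝ) x))
          (Eventually.of_forall fun x => abs_nonneg ((G : X → ℝ) x))
          hmD hmG
        have e1 : ∫ x, |(D : X → ℝ) x| ^ (2:ℝ) ∂m = ‖D‖ ^ 2 := by
          rw [aux_normsq]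
          refine integral_congr_ae (Eventually.of_forall fun x => ?_)
          simp only [show ((2:ℝ)) = ((2:ℕ):ℝ) by norm_num, Real.rpow_natCast, sq_abs]
        have e2 : ∫ x, |(G : X → ℝ) x| ^ (2:ℝ) ∂m = ‖G‖ ^ 2 := by
          rw [aux_normsq]
          refine integral_congr_ae (Eventually.of_forall fun x => ?_)
          simp only [show ((2:ℝ)) = ((2:ℕ):ℝ) by norm_num, Real.rpow_natCast, sq_abs]
        have e3 : ∀ c : ℝ, 0 ≤ c → (c ^ 2) ^ ((1:ℝ)/2) = c := by
          intro c hc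
          rw [← Real.rpow_natCast c 2, ← Real.rpow_mul hc]
          norm_num
        refine hhold.trans (le_of_eq ?_)
        rw [e1, e2, e3 _ (norm_nonneg D), e3 _ (norm_nonneg G)]
      calc ∫ x, |Γ (f n) x - (G : X → ℝ) x ^ 2| ∂m
          ≤ _ := step1
        _ = _ := step2
        _ ≤ ‖D‖ ^ 2 + 2 * (‖D‖ * ‖G‖) := by
            rw [← aux_normsq]
            have := step3
            nlinarith [norm_nonneg D, norm_nonneg G, step3]
        _ = ‖H (f n) - G‖ ^ 2 + 2 * (‖H (f n) - G‖ * ‖G‖) := by rw [hD]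
    have hlim : Tendsto (fun n => ‖H (f n) - G‖ ^ 2 + 2 * (‖H (f n) - G‖ * ‖G‖)) atTop (𝓝 0) := by
      have := ((hGnorm.pow 2).add (((hGnorm.mul_const ‖G‖)).const_mul 2))
      simpa using this
    refine squeeze_zero (fun n => integral_nonneg fun x => abs_nonneg _) key hlim
  obtain ⟨g, hgint, hconv⟩ := part1
  refine ⟨⟨g, hgint, hconv⟩, ?_⟩
  intro ε hε
  obtain ⟨N, hN⟩ := (Metric.tendsto_atTop.1 hconv) (ε / 2) (by positivity)
  have hN' : ∀ n ≥ N, ∫ x, |Γ (f n) x - g x| ∂m ≤ ε / 2 := by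
    intro n hn
    have := hN n hn
    rw [Real.dist_eq, sub_zero] at this
    exact (le_abs_self _).trans this.le
  obtain ⟨δg, hδg0, hδg⟩ := aux_abscont hgint (show (0:ℝ) < ε / 2 by positivity)
  obtain ⟨δ1, hδ10, hδ1⟩ := aux_fin (fun i => Γ (f i)) (fun i => hΓint (f i)) hε N
  refine ⟨min δg δ1, lt_min hδg0 hδ10, fun A hA hm n => ?_⟩
  have hmg : m A < ENNReal.ofReal δg :=
    hm.trans_le (ENNReal.ofReal_le_ofReal (min_le_left _ _))
  have hm1 : m A < ENNReal.ofReal δ1 :=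
    hm.trans_le (ENNReal.ofReal_le_ofReal (min_le_right _ _))
  have habs : ∫ x in A, Γ (f n) x ∂m = ∫ x in A, |Γ (f n) x| ∂m :=
    integral_congr_ae (Eventually.of_forall fun x => (abs_of_nonneg (hΓnonneg (f n) x)).symm)
  rcases lt_or_ge n N with hn | hn
  · rw [habs]
    exact hδ1 n hn A hA hm1
  · rw [habs]
    have hsub : Integrable (fun x => |Γ (f n) x - g x|) m := ((hΓint (f n)).sub hgint).abs
    calc ∫ x in A, |Γ (f n) x| ∂m
        ≤ ∫ x in A, (|Γ (f n) x - g x| + |g x|) ∂m := by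
          refine integral_mono ((hΓint (f n)).abs.restrict (s := A))
            ((hsub.add hgint.abs).restrict (s := A)) fun x => ?_
          calc |Γ (f n) x| = |Γ (f n) x - g x + g x| := by ring_nf
            _ ≤ |Γ (f n) x - g x| + |g x| := abs_add_le _ _
      _ = ∫ x in A, |Γ (f n) x - g x| ∂m + ∫ x in A, |g x| ∂m :=
          integral_add (hsub.restrict (s := A)) (hgint.abs.restrict (s := A))
      _ ≤ ∫ x, |Γ (f n) x - g x| ∂m + ε / 2 := by
          refine add_le_add ?_ ?_
          · exact setIntegral_le_integral hsub
              (Eventually.of_forall fun x => abs_nonneg _)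
          · exact hδg A hA hmg
      _ ≤ ε / 2 + ε / 2 := by gcongr; exact hN' n hn
      _ = ε := by ring
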